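/- Let G be a finite connected simple graph with at least two vertices, and let x and y be distinct vertices of G. Then the Ollivier–Ricci curvature κ(x,y) equals 1 if and only if x and y are structurally equivalent, i.e. they have exactly the same neighbourhoods in G. -/

import Mathlib

/-!
STATEMENT 2: Let G be a finite connected simple graph with at least two vertices,
and let x and y be distinct vertices of G. Then the Ollivier–Ricci curvature
κ(x,y) equals 1 if and only if x and y are structurally equivalent, i.e. they
have exactly the same neighbourhoods in G.
-/

open Finset

variable {V : Type*}

/-- A coupling of two measures `μ` and `ν` on a finite vertex set. -/
def IsCoupling [Fintype V] (μ ν : V → ℝ) (ξ : V → V → ℝ) : Prop :=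
  (∀ u v, 0 ≤ ξ u v) ∧ (∀ u, ∑ v, ξ u v = μ u) ∧ (∀ v, ∑ u, ξ u v = ν v)

/-- The 1-Wasserstein distance between `μ` and `ν` with respect to the
distance function `d`: the infimum over couplings of the transport cost. -/
noncomputable def W1 [Fintype V] (d : V → V → ℝ) (μ ν : V → ℝ) : ℝ :=
  sInf {c | ∃ ξ : V → V → ℝ, IsCoupling μ ν ξ ∧ c = ∑ u, ∑ v, d u v * ξ u v}

/-- The neighbour measure of a vertex `x`: mass `1/deg(x)` on each neighbour. -/
noncomputable def nbrMeasure [Fintype V] (G : SimpleGraph V) [DecidableRel G.Adj]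
    (x : V) : V → ℝ :=
  fun z => if G.Adj x z then 1 / (G.degree x : ℝ) else 0

/-- The Ollivier–Ricci curvature of a pair of vertices, computed with the
shortest-path distance of `G`. -/
noncomputable def orc [Fintype V] (G : SimpleGraph V) [DecidableRel G.Adj]
    (x y : V) : ℝ :=
  1 - W1 (fun u v => (G.dist u v : ℝ)) (nbrMeasure G x) (nbrMeasure G y) / (G.dist x y)

lemma nbr_nonneg [Fintype V] (G : SimpleGraph V) [DecidableRel G.Adj] (x z : V) :
    0 ≤ nbrMeasure G x z := by
  unfold nbrMeasure; positivity

lemma deg_pos [Fintype V] (G : SimpleGraph V) [DecidableRel G.Adj]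
    (hconn : G.Connected) (hcard : 2 ≤ Fintype.card V) (x : V) :
    0 < G.degree x := by
  obtain ⟨z, hz⟩ := Fintype.exists_ne_of_one_lt_card (by omega) x
  obtain ⟨w⟩ := hconn x z
  rw [SimpleGraph.degree_pos_iff_exists_adj]
  cases w with
  | nil => exact absurd rfl hz
  | cons h p => exact ⟨_, h⟩

lemma nbr_sum [Fintype V] (G : SimpleGraph V) [DecidableRel G.Adj] (x : V)
    (hx : 0 < G.degree x) : ∑ z, nbrMeasure G x z = 1 := by
  have : ∑ z, nbrMeasure G x z = ∑ z ∈ univ.filter (G.Adj x), 1 / (G.degree x : ℝ) := by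
    rw [Finset.sum_filter]; rfl
  rw [this, Finset.sum_const, ← SimpleGraph.neighborFinset_eq_filter, ← SimpleGraph.degree]
  rw [nsmul_eq_mul]
  have : (G.degree x : ℝ) ≠ 0 := Nat.cast_ne_zero.mpr hx.ne'
  field_simp

lemma coupling_cost_ge [Fintype V] (d : V → V → ℝ) (μ ν : V → ℝ) (ξ : V → V → ℝ)
    (hξ : IsCoupling μ ν ξ) (f : V → ℝ) (hf : ∀ u v, f u - f v ≤ d u v) :
    (∑ u, f u * μ u) - (∑ v, f v * ν v) ≤ ∑ u, ∑ v, d u v * ξ u v := by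
  obtain ⟨hpos, hrow, hcol⟩ := hξ
  have h2 : (∑ u, f u * μ u) - (∑ v, f v * ν v) = ∑ u, ∑ v, (f u - f v) * ξ u v := by
    simp only [sub_mul, Finset.sum_sub_distrib]
    congr 1
    · simp only [← hrow, Finset.mul_sum]
    · rw [Finset.sum_comm]
      simp only [← hcol, Finset.mul_sum]
  rw [h2]
  apply Finset.sum_le_sum; intro u _
  apply Finset.sum_le_sum; intro v _
  exact mul_le_mul_of_nonneg_right (hf u v) (hpos u v)

lemma couplings_nonempty [Fintype V] (d : V → V → ℝ) (μ ν : V → ℝ)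
    (hμ0 : ∀ z, 0 ≤ μ z) (hν0 : ∀ z, 0 ≤ ν z)
    (hμ1 : ∑ z, μ z = 1) (hν1 : ∑ z, ν z = 1) :
    {c | ∃ ξ : V → V → ℝ, IsCoupling μ ν ξ ∧ c = ∑ u, ∑ v, d u v * ξ u v}.Nonempty := by
  refine ⟨_, fun u v => μ u * ν v, ⟨fun u v => mul_nonneg (hμ0 u) (hν0 v), ?_, ?_⟩, rfl⟩
  · intro u; rw [← Finset.mul_sum, hν1, mul_one]
  · intro v; rw [← Finset.sum_mul, hμ1, one_mul]

lemma W1_nonneg [Fintype V] (G : SimpleGraph V) [DecidableRel G.Adj] (μ ν : V → ℝ) :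
    0 ≤ W1 (fun u v => (G.dist u v : ℝ)) μ ν := by
  apply Real.sInf_nonneg
  rintro c ⟨ξ, ⟨hpos, -, -⟩, rfl⟩
  apply Finset.sum_nonneg; intro u _
  apply Finset.sum_nonneg; intro v _
  exact mul_nonneg (Nat.cast_nonneg _) (hpos u v)

lemma W1_self_eq_zero [Fintype V] (G : SimpleGraph V) [DecidableRel G.Adj] (μ : V → ℝ)
    (hμ0 : ∀ z, 0 ≤ μ z) :
    W1 (fun u v => (G.dist u v : ℝ)) μ μ = 0 := by
  classical
  refine le_antisymm (csInf_le ⟨0, ?_⟩ ?_) (W1_nonneg G μ μ)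
  · rintro c ⟨ξ, ⟨hpos, -, -⟩, rfl⟩
    apply Finset.sum_nonneg; intro u _
    apply Finset.sum_nonneg; intro v _
    exact mul_nonneg (Nat.cast_nonneg _) (hpos u v)
  · refine ⟨fun u v => if u = v then μ u else 0, ⟨?_, ?_, ?_⟩, ?_⟩
    · intro u v; dsimp only; split <;> simp [hμ0]
    · intro u; simp
    · intro v; simp [Finset.sum_ite_eq]
    · symm
      apply Finset.sum_eq_zero; intro u _
      apply Finset.sum_eq_zero; intro v _
      dsimp only
      split
      · next h => subst h; simp
      · simp

lemma W1_zero_eq [Fintype V] (G : SimpleGraph V) [DecidableRel G.Adj]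
    (hconn : G.Connected) (μ ν : V → ℝ)
    (hμ0 : ∀ z, 0 ≤ μ z) (hν0 : ∀ z, 0 ≤ ν z)
    (hμ1 : ∑ z, μ z = 1) (hν1 : ∑ z, ν z = 1)
    (h0 : W1 (fun u v => (G.dist u v : ℝ)) μ ν = 0) (w : V) : μ w = ν w := by
  classical
  have hne := couplings_nonempty (fun u v => (G.dist u v : ℝ)) μ ν hμ0 hν0 hμ1 hν1
  have key : ∀ f : V → ℝ, (∀ u v, f u - f v ≤ (G.dist u v : ℝ)) →
      (∑ u, f u * μ u) - (∑ v, f v * ν v) ≤ 0 := by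
    intro f hf
    rw [← h0]
    exact le_csInf hne (by rintro c ⟨ξ, hξ, rfl⟩; exact coupling_cost_ge _ μ ν ξ hξ f hf)
  have hlip : ∀ (f : V → ℝ), (∀ a b, 0 ≤ f a - f b → f a - f b ≤ 1) →
      ∀ u v, f u - f v ≤ (G.dist u v : ℝ) := by
    intro f hb u v
    rcases eq_or_ne u v with rfl | huv
    · simp
    · rcases le_or_gt (f u - f v) 0 with h | h
      · exact h.trans (Nat.cast_nonneg _)
      · calc f u - f v ≤ 1 := hb u v h.le
          _ ≤ (G.dist u v : ℝ) := by
            exact_mod_cast Nat.one_le_cast.mpr (hconn.pos_dist_of_ne huv)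
  have h1 := key (fun z => if z = w then (1:ℝ) else 0) (hlip _ (by intro a b; split <;> split <;> norm_num))
  have h2 := key (fun z => if z = w then (0:ℝ) else 1) (hlip _ (by intro a b; split <;> split <;> norm_num))
  simp only [ite_mul, one_mul, zero_mul, Finset.sum_ite_eq', Finset.mem_univ, if_true] at h1
  have e1 : ∀ (ρ : V → ℝ), (∑ z, (if z = w then (0:ℝ) else 1) * ρ z)
      = (∑ z, ρ z) - ρ w := by
    intro ρ
    have : ∀ z, (if z = w then (0:ℝ) else 1) * ρ z = ρ z - (if z = w then ρ z else 0) := by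
      intro z; split <;> ring
    simp only [this, Finset.sum_sub_distrib, Finset.sum_ite_eq', Finset.mem_univ, if_true]
  rw [e1, e1, hμ1, hν1] at h2
  linarith

theorem stmt2 [Fintype V] (G : SimpleGraph V) [DecidableRel G.Adj]
    (hconn : G.Connected) (hcard : 2 ≤ Fintype.card V)
    (x y : V) (hxy : x ≠ y) :
    orc G x y = 1 ↔ (∀ c, G.Adj x c ↔ G.Adj y c) := by
  classical
  have hdx := deg_pos G hconn hcard x
  have hdy := deg_pos G hconn hcard y
  have hμ1 := nbr_sum G x hdx
  have hν1 := nbr_sum G y hdy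
  have hdist : (G.dist x y : ℝ) ≠ 0 :=
    Nat.cast_ne_zero.mpr (hconn.pos_dist_of_ne hxy).ne'
  unfold orc
  rw [sub_eq_self, div_eq_zero_iff, or_iff_left hdist]
  constructor
  · intro h c
    have hμν := fun w => W1_zero_eq G hconn _ _ (nbr_nonneg G x) (nbr_nonneg G y) hμ1 hν1 h w
    constructor
    · intro hadj
      by_contra hn
      have := hμν c
      simp only [nbrMeasure, if_pos hadj, if_neg hn] at this
      have : (G.degree x : ℝ) ≠ 0 := Nat.cast_ne_zero.mpr hdx.ne'
      simp_all
    · intro hadj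
      by_contra hn
      have := hμν c
      simp only [nbrMeasure, if_pos hadj, if_neg hn] at this
      have : (G.degree y : ℝ) ≠ 0 := Nat.cast_ne_zero.mpr hdy.ne'
      simp_all
  · intro h
    have hdeg : G.degree x = G.degree y := by
      unfold SimpleGraph.degree
      congr 1
      ext z
      simp [SimpleGraph.mem_neighborFinset, h z]
    have hμν : nbrMeasure G x = nbrMeasure G y := by
      funext z
      simp [nbrMeasure, h z, hdeg]
    rw [hμν]
    exact W1_self_eq_zero G _ (nbr_nonneg G y)
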